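/- Let G = (V⁺, V⁻; E) be a simple bipartite graph with edge weights w : E → ℝ and let μ be a matching of size k that has minimum weight among all matchings of size k in G. Let P be a shortest augmenting path in the auxiliary weighted graph (G_μ, w_μ), i.e., a directed path from a vertex of V⁺ unmatched by μ to a vertex of V⁻ unmatched by μ of minimum total auxiliary weight among all such paths. Then μ △ P is a matching of size k + 1 that has minimum weight among all matchings of size k + 1 in G. -/

import Mathlib

/-!  Common setup: weighted bipartite graphs `G = (V⁺, V⁻; E)` with `V⁺ = α`, `V⁻ = β`,
edges directed from `V⁺` to `V⁻`, auxiliary graphs of matchings, walks and cycles. -/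

variable {α β : Type*}

/-- Directed adjacency of the auxiliary graph `G_μ`: non-matching edges go from `V⁺` to `V⁻`,
matching edges are reversed. -/
def auxAdj (E μ : Finset (α × β)) : α ⊕ β → α ⊕ β → Prop
  | Sum.inl u, Sum.inr v => (u, v) ∈ E ∧ (u, v) ∉ μ
  | Sum.inr v, Sum.inl u => (u, v) ∈ μ
  | _, _ => False

/-- The auxiliary weight `w_μ`, as a function on pairs of vertices. -/
def auxW (w : α × β → ℝ) : α ⊕ β → α ⊕ β → ℝ
  | Sum.inl u, Sum.inr v => w (u, v)
  | Sum.inr v, Sum.inl u => - w (u, v)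
  | _, _ => 0

/-- Weight of a walk, given by its list of vertices. -/
def walkWeight {V : Type*} (W : V → V → ℝ) (l : List V) : ℝ :=
  ((l.zip l.tail).map fun p => W p.1 p.2).sum

/-- A (simple) directed path from `s` to `t`, given by its list of vertices. -/
def IsDiPath {V : Type*} (adj : V → V → Prop) (s t : V) (l : List V) : Prop :=
  l.head? = some s ∧ l.getLast? = some t ∧ l.Chain' adj ∧ l.Nodup

/-- A (simple) directed cycle, given by the list of its vertices (the closing edge
from the last vertex back to the first is implicit). -/
def IsDiCycle {V : Type*} (adj : V → V → Prop) (l : List V) : Prop :=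
  l ≠ [] ∧ l.Nodup ∧ (l ++ l.take 1).Chain' adj

/-- Total auxiliary weight of a directed cycle (including the closing edge). -/
def cycleWeight {V : Type*} (W : V → V → ℝ) (l : List V) : ℝ :=
  walkWeight W (l ++ l.take 1)

/-- The underlying undirected edge of a dart of the auxiliary graph. -/
def undEdge : (α ⊕ β) × (α ⊕ β) → Option (α × β)
  | (Sum.inl u, Sum.inr v) => some (u, v)
  | (Sum.inr v, Sum.inl u) => some (u, v)
  | _ => none

/-- The set of underlying edges of `G` used by a walk in the auxiliary graph. -/
def usedEdges [DecidableEq α] [DecidableEq β] (l : List (α ⊕ β)) : Finset (α × β) :=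
  ((l.zip l.tail).filterMap undEdge).toFinset

/-- An edge set is a matching if every vertex appears at most once. -/
def IsMatching (μ : Finset (α × β)) : Prop :=
  ∀ e ∈ μ, ∀ f ∈ μ, (e.1 = f.1 ∨ e.2 = f.2) → e = f

/-- A perfect matching: a matching contained in `E` covering every vertex. -/
def IsPerfectMatching (E μ : Finset (α × β)) : Prop :=
  μ ⊆ E ∧ IsMatching μ ∧ (∀ u : α, ∃ v : β, (u, v) ∈ μ) ∧ (∀ v : β, ∃ u : α, (u, v) ∈ μ)

/-- The weight of a matching. -/
def matchingWeight (w : α × β → ℝ) (μ : Finset (α × β)) : ℝ := ∑ e ∈ μ, w e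

/-- A minimum-weight perfect matching. -/
def IsMinPerfectMatching (E : Finset (α × β)) (w : α × β → ℝ) (μ : Finset (α × β)) : Prop :=
  IsPerfectMatching E μ ∧
    ∀ ν : Finset (α × β), IsPerfectMatching E ν → matchingWeight w μ ≤ matchingWeight w ν

/-- `p` is a potential for `(G_μ, w_μ)`: all reduced weights are nonnegative. -/
def IsPotential (E μ : Finset (α × β)) (w : α × β → ℝ) (p : α ⊕ β → ℝ) : Prop :=
  ∀ x y : α ⊕ β, auxAdj E μ x y → auxW w x y + p x - p y ≥ 0


/-! ### Auxiliary machinery for the proof -/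

section Machinery

variable {α β : Type*}

lemma mem_zip_iff {l1 : List α} {l2 : List β} {p : α × β} :
    p ∈ l1.zip l2 ↔ ∃ i, ∃ (_ : i < l1.length), ∃ (_ : i < l2.length), p = (l1[i], l2[i]) := by
  rw [List.mem_iff_getElem]
  constructor
  · rintro ⟨i, h, rfl⟩
    rw [List.length_zip] at h
    exact ⟨i, lt_of_lt_of_le h (min_le_left _ _), lt_of_lt_of_le h (min_le_right _ _),
      by rw [List.getElem_zip]⟩
  · rintro ⟨i, h1, h2, rfl⟩
    refine ⟨i, by rw [List.length_zip]; exact lt_min h1 h2, by rw [List.getElem_zip]⟩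

lemma head?_getElem {l : List α} (h : 0 < l.length) : l.head? = some l[0] := by
  rw [List.head?_eq_getElem?, List.getElem?_eq_getElem h]

lemma getLast?_getElem {l : List α} (h : 0 < l.length) :
    l.getLast? = some l[l.length - 1] := by
  rw [List.getLast?_eq_getElem?, List.getElem?_eq_getElem (by omega)]

lemma getElem_idx_eq {l : List α} {i j : ℕ} (h : i = j) (hi : i < l.length) :
    l[i] = l[j]'(h ▸ hi) := by subst h; rfl

lemma matching_subset {σ τ : Finset (α × β)} (h : τ ⊆ σ) (hσ : IsMatching σ) :
    IsMatching τ := fun e he f hf hs => hσ e (h he) f (h hf) hs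

lemma swapLemma [DecidableEq α] [DecidableEq β] (w : α × β → ℝ)
    (σ rem add : Finset (α × β)) (hσ : IsMatching σ) (hrem : rem ⊆ σ)
    (hadd : IsMatching add)
    (hcond : ∀ e ∈ add, ∀ f ∈ σ, (e.1 = f.1 ∨ e.2 = f.2) → f ∈ rem) :
    IsMatching ((σ \ rem) ∪ add) ∧
      ((σ \ rem) ∪ add).card + rem.card = σ.card + add.card ∧
      matchingWeight w ((σ \ rem) ∪ add) + matchingWeight w rem
        = matchingWeight w σ + matchingWeight w add := by
  have hdisj : Disjoint (σ \ rem) add := by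
    rw [Finset.disjoint_right]
    intro e he hf
    rcases Finset.mem_sdiff.mp hf with ⟨heσ, hner⟩
    exact hner (hcond e he e heσ (Or.inl rfl))
  refine ⟨?_, ?_, ?_⟩
  · intro e he f hf hshare
    rcases Finset.mem_union.mp he with he' | he' <;> rcases Finset.mem_union.mp hf with hf' | hf'
    · exact hσ e (Finset.mem_sdiff.mp he').1 f (Finset.mem_sdiff.mp hf').1 hshare
    · exfalso
      refine (Finset.mem_sdiff.mp he').2 (hcond f hf' e (Finset.mem_sdiff.mp he').1 ?_)
      rcases hshare with h | h
      · exact Or.inl h.symm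
      · exact Or.inr h.symm
    · exact absurd (hcond e he' f (Finset.mem_sdiff.mp hf').1 hshare) (Finset.mem_sdiff.mp hf').2
    · exact hadd e he' f hf' hshare
  · rw [Finset.card_union_of_disjoint hdisj, Finset.card_sdiff_of_subset hrem]
    have := Finset.card_le_card hrem
    omega
  · have h1 : ∑ x ∈ σ \ rem, w x + ∑ x ∈ rem, w x = ∑ x ∈ σ, w x := Finset.sum_sdiff hrem
    simp only [matchingWeight, Finset.sum_union hdisj]
    linarith


lemma zip_nodup_of_snd {as : List α} {bs : List β} (hb : bs.Nodup)
    (hlen : bs.length ≤ as.length) : (as.zip bs).Nodup := by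
  refine List.Nodup.of_map Prod.snd ?_
  rwa [List.map_snd_zip hlen]

lemma zip_nodup_of_fst {as : List α} {bs : List β} (ha : as.Nodup)
    (hlen : as.length ≤ bs.length) : (as.zip bs).Nodup := by
  refine List.Nodup.of_map Prod.fst ?_
  rwa [List.map_fst_zip hlen]

lemma zip_isMatching [DecidableEq α] [DecidableEq β] {as : List α} {bs : List β}
    (ha : as.Nodup) (hb : bs.Nodup) : IsMatching (as.zip bs).toFinset := by
  intro e he f hf hshare
  rw [List.mem_toFinset, mem_zip_iff] at he hf
  obtain ⟨i, hi1, hi2, rfl⟩ := he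
  obtain ⟨j, hj1, hj2, rfl⟩ := hf
  rcases hshare with h | h
  · obtain rfl : i = j := (ha.getElem_inj_iff).mp h
    rfl
  · obtain rfl : i = j := (hb.getElem_inj_iff).mp h
    rfl

lemma fwd_not_mem {μ : Finset (α × β)} (hμ : IsMatching μ) {as : List α} {bs : List β}
    (hb : bs.Nodup)
    (hbwd : ∀ p ∈ as.tail.zip bs, p ∈ μ)
    (hhead : ∀ a ∈ as.head?, ∀ y, (a, y) ∉ μ)
    : ∀ p ∈ as.zip bs, p ∉ μ := by
  intro p hp hpμ
  rw [mem_zip_iff] at hp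
  obtain ⟨i, hi1, hi2, rfl⟩ := hp
  match i, hi1, hi2 with
  | 0, hi1, hi2 =>
    exact hhead as[0] (by rw [head?_getElem (by omega)]; rfl) bs[0] hpμ
  | (j+1), hi1, hi2 =>
    have hq : (as.tail[j]'(by rw [List.length_tail]; omega), bs[j]) ∈ as.tail.zip bs := by
      rw [mem_zip_iff]
      exact ⟨j, by rw [List.length_tail]; omega, by omega, rfl⟩
    rw [List.getElem_tail] at hq
    have hqμ := hbwd _ hq
    have := hμ _ hpμ _ hqμ (Or.inl rfl)
    have : bs[j+1] = bs[j] := congrArg Prod.snd this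
    have : j + 1 = j := (hb.getElem_inj_iff).mp this
    omega

/-- The swap of the path edges along `μ` (the matching whose edges are the
backward edges of the path). -/
lemma muSwap [DecidableEq α] [DecidableEq β] (w : α × β → ℝ) (μ : Finset (α × β))
    (as : List α) (bs : List β) (hμ : IsMatching μ)
    (ha : as.Nodup) (hb : bs.Nodup)
    (hbwd : ∀ p ∈ as.tail.zip bs, p ∈ μ)
    (hhead : ∀ a ∈ as.head?, ∀ y, (a, y) ∉ μ)
    (hcase : (as.length = bs.length ∧ ∀ b ∈ bs.getLast?, ∀ x, (x, b) ∉ μ)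
      ∨ as.length = bs.length + 1) :
    IsMatching ((μ \ (as.tail.zip bs).toFinset) ∪ (as.zip bs).toFinset) ∧
      ((μ \ (as.tail.zip bs).toFinset) ∪ (as.zip bs).toFinset).card + (as.length - 1)
        = μ.card + min as.length bs.length ∧
      matchingWeight w ((μ \ (as.tail.zip bs).toFinset) ∪ (as.zip bs).toFinset)
          + ((as.tail.zip bs).map w).sum
        = matchingWeight w μ + ((as.zip bs).map w).sum := by
  have hlen1 : bs.length ≤ as.length := by rcases hcase with ⟨h, _⟩ | h <;> omega
  have hlen2 : as.length - 1 ≤ bs.length := by rcases hcase with ⟨h, _⟩ | h <;> omega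
  have hbwdnd : (as.tail.zip bs).Nodup :=
    zip_nodup_of_fst (ha.sublist (List.tail_sublist as)) (by rw [List.length_tail]; exact hlen2)
  have hfwdnd : (as.zip bs).Nodup := zip_nodup_of_snd hb hlen1
  have hremsub : (as.tail.zip bs).toFinset ⊆ μ := by
    intro p hp; exact hbwd p (List.mem_toFinset.mp hp)
  have hcond : ∀ e ∈ (as.zip bs).toFinset, ∀ f ∈ μ, (e.1 = f.1 ∨ e.2 = f.2) →
      f ∈ (as.tail.zip bs).toFinset := by
    intro e he f hf hshare
    rw [List.mem_toFinset, mem_zip_iff] at he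
    obtain ⟨i, hi1, hi2, rfl⟩ := he
    rcases hshare with h | h
    · -- first coordinates agree
      match i, hi1, hi2 with
      | 0, hi1, hi2 =>
        exfalso
        refine hhead as[0] (by rw [head?_getElem (by omega)]; rfl) f.2 ?_
        have h' : as[0] = f.1 := h
        have : f = (as[0], f.2) := by rw [h']
        rwa [← this]
      | (j+1), hi1, hi2 =>
        have hjt : j < as.tail.length := by rw [List.length_tail]; omega
        have hq : (as.tail[j], bs[j]) ∈ as.tail.zip bs := by
          rw [mem_zip_iff]
          exact ⟨j, hjt, by omega, rfl⟩
        have het : as.tail[j] = as[j+1] := List.getElem_tail hjt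
        have hqμ : (as[j+1], bs[j]) ∈ μ := by rw [← het]; exact hbwd _ hq
        have hfe : f = (as[j+1], bs[j]) := hμ f hf _ hqμ (Or.inl h.symm)
        rw [hfe, List.mem_toFinset, ← het]
        exact hq
    · -- second coordinates agree
      by_cases hi : i + 1 < as.length
      · have hit : i < as.tail.length := by rw [List.length_tail]; omega
        have hq : (as.tail[i], bs[i]) ∈ as.tail.zip bs := by
          rw [mem_zip_iff]
          exact ⟨i, hit, by omega, rfl⟩
        have het : as.tail[i] = as[i+1] := List.getElem_tail hit
        have hqμ : (as[i+1], bs[i]) ∈ μ := by rw [← het]; exact hbwd _ hq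
        have hfe : f = (as[i+1], bs[i]) := hμ f hf _ hqμ (Or.inr h.symm)
        rw [hfe, List.mem_toFinset, ← het]
        exact hq
      · exfalso
        rcases hcase with ⟨hl, hlast⟩ | hl
        · have hieq : i = bs.length - 1 := by omega
          refine hlast bs[i] ?_ f.1 ?_
          · rw [getLast?_getElem (show 0 < bs.length by omega)]
            simp only [Option.mem_def, Option.some.injEq]
            exact getElem_idx_eq (by omega) (by omega)
          · have h' : bs[i] = f.2 := h
            have : f = (f.1, bs[i]) := by rw [h']
            rwa [← this]
        · omega
  obtain ⟨h1, h2, h3⟩ := swapLemma w μ (as.tail.zip bs).toFinset (as.zip bs).toFinset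
    hμ hremsub (zip_isMatching ha hb) hcond
  refine ⟨h1, ?_, ?_⟩
  · have e1 : (as.tail.zip bs).toFinset.card = as.length - 1 := by
      rw [List.toFinset_card_of_nodup hbwdnd, List.length_zip, List.length_tail]
      omega
    have e2 : (as.zip bs).toFinset.card = min as.length bs.length := by
      rw [List.toFinset_card_of_nodup hfwdnd, List.length_zip]
    rw [e1, e2] at h2
    omega
  · have e1 : matchingWeight w (as.tail.zip bs).toFinset = ((as.tail.zip bs).map w).sum :=
      List.sum_toFinset w hbwdnd
    have e2 : matchingWeight w (as.zip bs).toFinset = ((as.zip bs).map w).sum :=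
      List.sum_toFinset w hfwdnd
    rw [e1, e2] at h3
    exact h3

/-- The swap of the path edges along `ν` (the matching whose edges are the
forward edges of the path). -/
lemma nuSwap [DecidableEq α] [DecidableEq β] (w : α × β → ℝ) (ν : Finset (α × β))
    (as : List α) (bs : List β) (hν : IsMatching ν)
    (ha : as.Nodup) (hb : bs.Nodup)
    (hfwd : ∀ p ∈ as.zip bs, p ∈ ν)
    (hlen : as.length = bs.length ∨ as.length = bs.length + 1)
    (hlast : as.length = bs.length + 1 → ∀ a ∈ as.getLast?, ∀ y, (a, y) ∉ ν) :
    IsMatching ((ν \ (as.zip bs).toFinset) ∪ (as.tail.zip bs).toFinset) ∧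
      ((ν \ (as.zip bs).toFinset) ∪ (as.tail.zip bs).toFinset).card + min as.length bs.length
        = ν.card + (as.length - 1) ∧
      matchingWeight w ((ν \ (as.zip bs).toFinset) ∪ (as.tail.zip bs).toFinset)
          + ((as.zip bs).map w).sum
        = matchingWeight w ν + ((as.tail.zip bs).map w).sum := by
  have hlen1 : bs.length ≤ as.length := by rcases hlen with h | h <;> omega
  have hlen2 : as.length - 1 ≤ bs.length := by rcases hlen with h | h <;> omega
  have hbwdnd : (as.tail.zip bs).Nodup :=
    zip_nodup_of_fst (ha.sublist (List.tail_sublist as)) (by rw [List.length_tail]; exact hlen2)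
  have hfwdnd : (as.zip bs).Nodup := zip_nodup_of_snd hb hlen1
  have hremsub : (as.zip bs).toFinset ⊆ ν := by
    intro p hp; exact hfwd p (List.mem_toFinset.mp hp)
  have hcond : ∀ e ∈ (as.tail.zip bs).toFinset, ∀ f ∈ ν, (e.1 = f.1 ∨ e.2 = f.2) →
      f ∈ (as.zip bs).toFinset := by
    intro e he f hf hshare
    rw [List.mem_toFinset, mem_zip_iff] at he
    obtain ⟨i, hi1, hi2, rfl⟩ := he
    rw [List.length_tail] at hi1
    have het : as.tail[i]'(by rw [List.length_tail]; omega) = as[i+1]'(by omega) :=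
      List.getElem_tail (by rw [List.length_tail]; omega)
    simp only [het] at hshare
    rcases hshare with h | h
    · -- first coordinates agree: as[i+1] = f.1
      by_cases hi : i + 1 < bs.length
      · have hq : (as[i+1]'(by omega), bs[i+1]) ∈ as.zip bs := by
          rw [mem_zip_iff]; exact ⟨i+1, by omega, by omega, rfl⟩
        have hqν := hfwd _ hq
        have : f = (as[i+1], bs[i+1]) := hν f hf _ hqν (Or.inl h.symm)
        rw [this, List.mem_toFinset]
        exact hq
      · exfalso
        have hlB : as.length = bs.length + 1 := by
          rcases hlen with hl | hl
          · omega
          · exact hl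
        have hieq : i + 1 = as.length - 1 := by omega
        refine hlast hlB as[i+1] ?_ f.2 ?_
        · rw [getLast?_getElem (show 0 < as.length by omega)]
          simp only [Option.mem_def, Option.some.injEq]
          exact getElem_idx_eq (by omega) (by omega)
        · have h' : as[i+1] = f.1 := h
          have : f = (as[i+1], f.2) := by rw [h']
          rwa [← this]
    · -- second coordinates agree: bs[i] = f.2
      have hq : (as[i]'(by omega), bs[i]) ∈ as.zip bs := by
        rw [mem_zip_iff]; exact ⟨i, by omega, by omega, rfl⟩
      have hqν := hfwd _ hq
      have hfe : f = (as[i], bs[i]) := hν f hf _ hqν (Or.inr h.symm)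
      rw [hfe, List.mem_toFinset]
      exact hq
  obtain ⟨h1, h2, h3⟩ := swapLemma w ν (as.zip bs).toFinset (as.tail.zip bs).toFinset
    hν hremsub (zip_isMatching (ha.sublist (List.tail_sublist as)) hb) hcond
  refine ⟨h1, ?_, ?_⟩
  · have e1 : (as.tail.zip bs).toFinset.card = as.length - 1 := by
      rw [List.toFinset_card_of_nodup hbwdnd, List.length_zip, List.length_tail]
      omega
    have e2 : (as.zip bs).toFinset.card = min as.length bs.length := by
      rw [List.toFinset_card_of_nodup hfwdnd, List.length_zip]
    rw [e1, e2] at h2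
    omega
  · have e1 : matchingWeight w (as.tail.zip bs).toFinset = ((as.tail.zip bs).map w).sum :=
      List.sum_toFinset w hbwdnd
    have e2 : matchingWeight w (as.zip bs).toFinset = ((as.zip bs).map w).sum :=
      List.sum_toFinset w hfwdnd
    rw [e1, e2] at h3
    exact h3


/-- Extraction of an alternating path of `symmDiff μ ν` starting at a `μ`-unmatched,
`ν`-matched vertex of `V⁺`. -/
lemma extract [DecidableEq α] [DecidableEq β] :
    ∀ (n : ℕ) (μ ν : Finset (α × β)), ν.card ≤ n → IsMatching μ → IsMatching ν →
    ∀ a0 b0, (a0, b0) ∈ ν → (∀ y, (a0, y) ∉ μ) →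
    ∃ (as : List α) (bs : List β),
      as.head? = some a0 ∧ bs ≠ [] ∧ as.Nodup ∧ bs.Nodup ∧
      (∀ p ∈ as.zip bs, p ∈ ν) ∧ (∀ p ∈ as.tail.zip bs, p ∈ μ) ∧
      (∀ a ∈ as, a = a0 ∨ ∃ y, (a, y) ∈ μ) ∧
      ((as.length = bs.length ∧ ∀ b ∈ bs.getLast?, ∀ x, (x, b) ∉ μ) ∨
       (as.length = bs.length + 1 ∧ ∀ a ∈ as.getLast?, ∀ y, (a, y) ∉ ν)) := by
  intro n
  induction n with
  | zero =>
    intro μ ν hcard _ _ a0 b0 h _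
    exact absurd (Finset.card_pos.mpr ⟨_, h⟩) (by omega)
  | succ n IH =>
    intro μ ν hcard hμ hν a0 b0 hab ha0
    by_cases hb0 : ∃ a1, (a1, b0) ∈ μ
    · obtain ⟨a1, ha1⟩ := hb0
      have hne : a1 ≠ a0 := fun h => ha0 b0 (h ▸ ha1)
      set μ' := μ.erase (a1, b0) with hμ'def
      set ν' := ν.erase (a0, b0) with hν'def
      have hμ'sub : μ' ⊆ μ := Finset.erase_subset _ _
      have hν'sub : ν' ⊆ ν := Finset.erase_subset _ _
      have hμ'm : IsMatching μ' := matching_subset hμ'sub hμ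
      have hν'm : IsMatching ν' := matching_subset hν'sub hν
      have ha1μ' : ∀ y, (a1, y) ∉ μ' := by
        intro y hy
        have h1 := hμ'sub hy
        have h2 := hμ _ h1 _ ha1 (Or.inl rfl)
        rw [h2] at hy
        exact (Finset.notMem_erase _ _) hy
      by_cases hb1 : ∃ b1, (a1, b1) ∈ ν'
      · obtain ⟨b1, hb1⟩ := hb1
        have hcard' : ν'.card ≤ n := by
          rw [hν'def, Finset.card_erase_of_mem hab]; omega
        obtain ⟨as', bs', hhead', hbs'ne, hnda', hndb', hfwd', hbwd', hinv', hfin'⟩ :=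
          IH μ' ν' hcard' hμ'm hν'm a1 b1 hb1 ha1μ'
        obtain ⟨as'', rfl⟩ : ∃ t, as' = a1 :: t := by
          cases as' with
          | nil => exact absurd hhead' (by simp)
          | cons x t =>
            simp only [List.head?_cons, Option.some.injEq] at hhead'
            exact ⟨t, by rw [hhead']⟩
        have ha0nas : a0 ∉ (a1 :: as'') := by
          intro hmem
          rcases hinv' a0 hmem with h | ⟨y, hy⟩
          · exact hne h.symm
          · exact ha0 y (hμ'sub hy)
        have hb0nbs : b0 ∉ bs' := by
          intro hmem
          rw [List.mem_iff_getElem] at hmem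
          obtain ⟨i, hi, hib⟩ := hmem
          have hilen : i < (a1 :: as'').length := by
            rcases hfin' with ⟨hl, _⟩ | ⟨hl, _⟩ <;> omega
          have hp : ((a1 :: as'')[i], bs'[i]) ∈ (a1 :: as'').zip bs' := by
            rw [mem_zip_iff]; exact ⟨i, hilen, hi, rfl⟩
          have hpν' := hfwd' _ hp
          have hpν := hν'sub hpν'
          have heq : ((a1 :: as'')[i], bs'[i]) = (a0, b0) :=
            hν _ hpν _ hab (Or.inr (by rw [hib]))
          rw [heq] at hpν'
          exact (Finset.notMem_erase _ _) hpν'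
        refine ⟨a0 :: a1 :: as'', b0 :: bs', rfl, by simp, ?_, ?_, ?_, ?_, ?_, ?_⟩
        · exact List.nodup_cons.mpr ⟨ha0nas, hnda'⟩
        · exact List.nodup_cons.mpr ⟨hb0nbs, hndb'⟩
        · intro p hp
          rw [List.zip_cons_cons, List.mem_cons] at hp
          rcases hp with rfl | hp
          · exact hab
          · exact hν'sub (hfwd' _ hp)
        · intro p hp
          rw [List.tail_cons, List.zip_cons_cons, List.mem_cons] at hp
          rcases hp with rfl | hp
          · exact ha1
          · exact hμ'sub (hbwd' _ (by rw [List.tail_cons]; exact hp))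
        · intro a hmem
          rcases List.mem_cons.mp hmem with rfl | hmem
          · exact Or.inl rfl
          · rcases hinv' a hmem with h | ⟨y, hy⟩
            · exact Or.inr ⟨b0, h ▸ ha1⟩
            · exact Or.inr ⟨y, hμ'sub hy⟩
        · rcases hfin' with ⟨hl, hlast⟩ | ⟨hl, hlast⟩
          · left
            refine ⟨by simp [hl], ?_⟩
            intro b hb x hxb
            have hgl : (b0 :: bs').getLast? = bs'.getLast? := by
              cases bs' with
              | nil => exact absurd rfl hbs'ne
              | cons c t => exact List.getLast?_cons_cons
            rw [hgl] at hb
            have hbmem : b ∈ bs' := by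
              obtain ⟨ys, hys⟩ := List.getLast?_eq_some_iff.mp (Option.mem_def.mp hb)
              rw [hys]; simp
            by_cases hx : (x, b) = (a1, b0)
            · have hbb : b = b0 := congrArg Prod.snd hx
              exact hb0nbs (hbb ▸ hbmem)
            · exact hlast b hb x (Finset.mem_erase.mpr ⟨hx, hxb⟩)
          · right
            refine ⟨by simp [hl], ?_⟩
            intro a hamem y hya
            have hgl : (a0 :: a1 :: as'').getLast? = (a1 :: as'').getLast? :=
              List.getLast?_cons_cons
            rw [hgl] at hamem
            have haa : a ∈ (a1 :: as'') := by
              obtain ⟨ys, hys⟩ := List.getLast?_eq_some_iff.mp (Option.mem_def.mp hamem)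
              rw [hys]; simp
            by_cases hx : (a, y) = (a0, b0)
            · have haa0 : a = a0 := congrArg Prod.fst hx
              exact ha0nas (haa0 ▸ haa)
            · exact hlast a hamem y (Finset.mem_erase.mpr ⟨hx, hya⟩)
      · -- `a1` is `ν`-unmatched apart from possibly `(a0, b0)`, which it is not on
        have ha1ν : ∀ y, (a1, y) ∉ ν := by
          intro y hy
          by_cases hxy : (a1, y) = (a0, b0)
          · exact hne (congrArg Prod.fst hxy)
          · exact hb1 ⟨y, Finset.mem_erase.mpr ⟨hxy, hy⟩⟩
        refine ⟨[a0, a1], [b0], rfl, by simp, by simp [hne.symm], by simp, ?_, ?_, ?_,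
          Or.inr ⟨by simp, ?_⟩⟩
        · intro p hp
          simp only [List.zip_cons_cons, List.zip_nil_right, List.mem_singleton] at hp
          rw [hp]; exact hab
        · intro p hp
          simp only [List.tail_cons, List.zip_cons_cons, List.zip_nil_right,
            List.mem_singleton] at hp
          rw [hp]; exact ha1
        · intro a ha
          rcases List.mem_cons.mp ha with rfl | ha
          · exact Or.inl rfl
          · rcases List.mem_cons.mp ha with rfl | ha
            · exact Or.inr ⟨b0, ha1⟩
            · exact absurd ha List.not_mem_nil
        · intro a ha y
          simp only [List.getLast?_cons_cons, List.getLast?_singleton, Option.mem_def,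
            Option.some.injEq] at ha
          rw [← ha]; exact ha1ν y
    · push_neg at hb0
      refine ⟨[a0], [b0], rfl, by simp, by simp, by simp, ?_, by simp, ?_,
        Or.inl ⟨by simp, ?_⟩⟩
      · intro p hp
        simp only [List.zip_cons_cons, List.zip_nil_right, List.mem_singleton] at hp
        rw [hp]; exact hab
      · intro a ha
        simp only [List.mem_singleton] at ha
        exact Or.inl ha
      · intro b hb x
        simp only [List.getLast?_singleton, Option.mem_def, Option.some.injEq] at hb
        rw [← hb]; exact hb0 x


/-- Interleave a list of `V⁺`-vertices and a list of `V⁻`-vertices into a walk. -/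
def ilv : List α → List β → List (α ⊕ β)
  | [], _ => []
  | a :: _, [] => [Sum.inl a]
  | a :: as, b :: bs => Sum.inl a :: Sum.inr b :: ilv as bs

lemma ilv_head? (a : α) (as : List α) (bs : List β) :
    (ilv (a :: as) bs).head? = some (Sum.inl a) := by
  cases bs <;> simp [ilv]

lemma ilv_cons_exists (a : α) (as : List α) (bs : List β) :
    ∃ t, ilv (a :: as) bs = Sum.inl a :: t := by
  cases bs <;> exact ⟨_, rfl⟩

lemma ilv_perm : ∀ (as : List α) (bs : List β),
    as.length = bs.length ∨ as.length = bs.length + 1 →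
    (ilv as bs).Perm (as.map Sum.inl ++ bs.map Sum.inr) := by
  intro as
  induction as with
  | nil =>
    intro bs h
    obtain rfl : bs = [] := by
      cases bs with
      | nil => rfl
      | cons b t => simp at h
    simp [ilv]
  | cons a as' IH =>
    intro bs h
    cases bs with
    | nil =>
      obtain rfl : as' = [] := by
        rcases h with h | h <;> simp at h
        exact h
      simp [ilv]
    | cons b bs' =>
      have hlen : as'.length = bs'.length ∨ as'.length = bs'.length + 1 := by
        simp only [List.length_cons] at h; omega
      simp only [ilv, List.map_cons, List.cons_append]
      refine List.Perm.trans (List.Perm.cons _ (List.Perm.cons _ (IH bs' hlen))) ?_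
      exact List.Perm.cons _ (List.perm_middle.symm)

lemma ilv_nodup_iff {as : List α} {bs : List β}
    (h : as.length = bs.length ∨ as.length = bs.length + 1) :
    (ilv as bs).Nodup ↔ as.Nodup ∧ bs.Nodup := by
  rw [(ilv_perm as bs h).nodup_iff, List.nodup_append,
    List.nodup_map_iff Sum.inl_injective, List.nodup_map_iff Sum.inr_injective]
  have hd : (as.map Sum.inl).Disjoint (bs.map Sum.inr) := by
    intro x hx hy
    rw [List.mem_map] at hx hy
    obtain ⟨a, _, rfl⟩ := hx
    obtain ⟨b, _, hb⟩ := hy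
    simp at hb
  have hd' : ∀ a ∈ as.map Sum.inl, ∀ b ∈ bs.map Sum.inr, a ≠ b :=
    fun a ha b hb hab => hd ha (hab ▸ hb)
  tauto

lemma ilv_getLast? : ∀ (as : List α) (bs : List β), as.length = bs.length → bs ≠ [] →
    (ilv as bs).getLast? = bs.getLast?.map Sum.inr := by
  intro as
  induction as with
  | nil =>
    intro bs h hne
    cases bs with
    | nil => exact absurd rfl hne
    | cons b t => simp at h
  | cons a as' IH =>
    intro bs h hne
    cases bs with
    | nil => exact absurd rfl hne
    | cons b bs' =>
      simp only [ilv]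
      cases as' with
      | nil =>
        obtain rfl : bs' = [] := by
          simp only [List.length_cons, List.length_nil] at h
          exact List.length_eq_zero_iff.mp (by omega)
        simp [ilv]
      | cons a' as'' =>
        have hbs' : bs' ≠ [] := by
          intro e; subst e; simp at h
        have hlen : (a' :: as'').length = bs'.length := by
          simp only [List.length_cons] at h ⊢; omega
        rw [List.getLast?_cons_cons]
        obtain ⟨t', ht⟩ := ilv_cons_exists a' as'' bs'
        rw [ht, List.getLast?_cons_cons, ← ht, IH bs' hlen hbs']
        have hgl : (b :: bs').getLast? = bs'.getLast? := by
          cases bs' with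
          | nil => exact absurd rfl hbs'
          | cons c t => exact List.getLast?_cons_cons
        rw [hgl]

lemma ilv_chain'_iff (adj : α ⊕ β → α ⊕ β → Prop) :
    ∀ (as : List α) (bs : List β), as.length = bs.length ∨ as.length = bs.length + 1 →
    (List.Chain' adj (ilv as bs) ↔
      (∀ p ∈ as.zip bs, adj (Sum.inl p.1) (Sum.inr p.2)) ∧
      (∀ p ∈ as.tail.zip bs, adj (Sum.inr p.2) (Sum.inl p.1))) := by
  intro as
  induction as with
  | nil =>
    intro bs h
    obtain rfl : bs = [] := by
      cases bs with
      | nil => rfl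
      | cons b t => simp at h
    simp [ilv, List.Chain']
  | cons a as' IH =>
    intro bs h
    cases bs with
    | nil =>
      obtain rfl : as' = [] := by
        rcases h with h | h <;> simp at h
        exact h
      simp [ilv, List.Chain']
    | cons b bs' =>
      have hlen : as'.length = bs'.length ∨ as'.length = bs'.length + 1 := by
        simp only [List.length_cons] at h; omega
      simp only [ilv]
      cases as' with
      | nil =>
        obtain rfl : bs' = [] := by
          rcases hlen with h' | h' <;> simp at h'
          exact List.length_eq_zero_iff.mp h'.symm
        simp [ilv, List.Chain', List.isChain_cons_cons]
      | cons a' as'' =>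
        simp only [List.Chain'] at IH ⊢
        rw [List.isChain_cons_cons, List.isChain_cons, ilv_head?, IH bs' hlen]
        simp only [List.zip_cons_cons, List.tail_cons, List.forall_mem_cons,
          Option.mem_def, Option.some.injEq]
        constructor
        · rintro ⟨h1, h2, h3, h4⟩
          exact ⟨⟨h1, h3⟩, ⟨h2 _ rfl, h4⟩⟩
        · rintro ⟨⟨h1, h3⟩, h2, h4⟩
          exact ⟨h1, fun y hy => hy ▸ h2, h3, h4⟩

@[simp] lemma undEdge_lr (a : α) (b : β) : undEdge (Sum.inl a, Sum.inr b) = some (a, b) := rfl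
@[simp] lemma undEdge_rl (a : α) (b : β) : undEdge (Sum.inr b, Sum.inl a) = some (a, b) := rfl

lemma used_ilv : ∀ (as : List α) (bs : List β),
    as.length = bs.length ∨ as.length = bs.length + 1 →
    (((ilv as bs).zip (ilv as bs).tail).filterMap undEdge).Perm
      (as.zip bs ++ as.tail.zip bs) := by
  intro as
  induction as with
  | nil =>
    intro bs h
    obtain rfl : bs = [] := by
      cases bs with
      | nil => rfl
      | cons b t => simp at h
    simp [ilv]
  | cons a as' IH =>
    intro bs h
    cases bs with
    | nil =>
      obtain rfl : as' = [] := by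
        rcases h with h | h <;> simp at h
        exact h
      simp [ilv]
    | cons b bs' =>
      have hlen : as'.length = bs'.length ∨ as'.length = bs'.length + 1 := by
        simp only [List.length_cons] at h; omega
      cases as' with
      | nil =>
        obtain rfl : bs' = [] := by
          rcases hlen with h' | h' <;> simp at h'
          exact List.length_eq_zero_iff.mp h'.symm
        simp [ilv]
      | cons a' as'' =>
        obtain ⟨t', ht⟩ := ilv_cons_exists a' as'' bs'
        have hfold : (Sum.inl a' :: t').zip t'
            = (ilv (a' :: as'') bs').zip ((ilv (a' :: as'') bs').tail) := by
          rw [ht, List.tail_cons]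
        simp only [ilv]
        rw [ht]
        simp only [List.tail_cons, List.zip_cons_cons, List.filterMap_cons, undEdge_lr,
          undEdge_rl]
        rw [hfold]
        refine List.Perm.trans (List.Perm.cons _ (List.Perm.cons _ (IH bs' hlen))) ?_
        simp only [List.zip_cons_cons, List.tail_cons, List.cons_append]
        exact List.Perm.cons _ (List.perm_middle.symm)

lemma walkWeight_cons_cons {V : Type*} (W : V → V → ℝ) (x y : V) (l : List V) :
    walkWeight W (x :: y :: l) = W x y + walkWeight W (y :: l) := by
  simp [walkWeight]

@[simp] lemma auxW_lr (w : α × β → ℝ) (a : α) (b : β) :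
    auxW w (Sum.inl a) (Sum.inr b) = w (a, b) := rfl
@[simp] lemma auxW_rl (w : α × β → ℝ) (a : α) (b : β) :
    auxW w (Sum.inr b) (Sum.inl a) = - w (a, b) := rfl

lemma walkWeight_ilv (w : α × β → ℝ) : ∀ (as : List α) (bs : List β),
    as.length = bs.length ∨ as.length = bs.length + 1 →
    walkWeight (auxW w) (ilv as bs)
      = ((as.zip bs).map w).sum - ((as.tail.zip bs).map w).sum := by
  intro as
  induction as with
  | nil =>
    intro bs h
    obtain rfl : bs = [] := by
      cases bs with
      | nil => rfl
      | cons b t => simp at h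
    simp [ilv, walkWeight]
  | cons a as' IH =>
    intro bs h
    cases bs with
    | nil =>
      obtain rfl : as' = [] := by
        rcases h with h | h <;> simp at h
        exact h
      simp [ilv, walkWeight]
    | cons b bs' =>
      have hlen : as'.length = bs'.length ∨ as'.length = bs'.length + 1 := by
        simp only [List.length_cons] at h; omega
      cases as' with
      | nil =>
        obtain rfl : bs' = [] := by
          rcases hlen with h' | h' <;> simp at h'
          exact List.length_eq_zero_iff.mp h'.symm
        simp [ilv, walkWeight]
      | cons a' as'' =>
        obtain ⟨t', ht⟩ := ilv_cons_exists a' as'' bs'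
        simp only [ilv]
        rw [walkWeight_cons_cons, ht, walkWeight_cons_cons, ← ht, IH bs' hlen]
        simp only [List.zip_cons_cons, List.tail_cons, List.map_cons, List.sum_cons,
          auxW_lr, auxW_rl]
        ring

lemma decode (E μ : Finset (α × β)) :
    ∀ (n : ℕ) (l : List (α ⊕ β)), l.length ≤ n → l.Chain' (auxAdj E μ) →
    ∀ u0 v0, l.head? = some (Sum.inl u0) → l.getLast? = some (Sum.inr v0) →
    ∃ (as : List α) (bs : List β), l = ilv as bs ∧ as.length = bs.length ∧
      as.head? = some u0 ∧ bs.getLast? = some v0 ∧ bs ≠ [] ∧ as ≠ [] := by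
  intro n
  induction n with
  | zero =>
    intro l hl _ u0 v0 hh _
    cases l with
    | nil => simp at hh
    | cons x t => simp at hl
  | succ n IH =>
    intro l hl hc u0 v0 hh hlast
    obtain ⟨x, rest, rfl⟩ : ∃ x rest, l = x :: rest := by
      cases l with
      | nil => simp at hh
      | cons x t => exact ⟨_, _, rfl⟩
    obtain rfl : x = Sum.inl u0 := by
      simp only [List.head?_cons, Option.some.injEq] at hh
      exact hh
    cases rest with
    | nil => simp at hlast
    | cons y rest' =>
      have hadj1 : auxAdj E μ (Sum.inl u0) y := (List.isChain_cons_cons.mp hc).1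
      obtain ⟨b, rfl⟩ : ∃ b, y = Sum.inr b := by
        cases y with
        | inl a => exact absurd hadj1 (by simp [auxAdj])
        | inr b => exact ⟨_, rfl⟩
      cases rest' with
      | nil =>
        have hbv : b = v0 := by
          simp only [List.getLast?_cons_cons, List.getLast?_singleton, Option.some.injEq,
            Sum.inr.injEq] at hlast
          exact hlast
        subst hbv
        exact ⟨[u0], [b], by simp [ilv], rfl, rfl, by simp, by simp, by simp⟩
      | cons z rest'' =>
        have hc2 := (List.isChain_cons_cons.mp hc).2
        have hadj2 : auxAdj E μ (Sum.inr b) z := (List.isChain_cons_cons.mp hc2).1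
        obtain ⟨u1, rfl⟩ : ∃ u1, z = Sum.inl u1 := by
          cases z with
          | inl a => exact ⟨_, rfl⟩
          | inr c => exact absurd hadj2 (by simp [auxAdj])
        have hc3 := (List.isChain_cons_cons.mp hc2).2
        rw [List.getLast?_cons_cons, List.getLast?_cons_cons] at hlast
        obtain ⟨as', bs', heq, hlen, hhead', hlast', hbs'ne, has'ne⟩ :=
          IH (Sum.inl u1 :: rest'') (by simp only [List.length_cons] at hl ⊢; omega)
            hc3 u1 v0 rfl hlast
        refine ⟨u0 :: as', b :: bs', ?_, by simp [hlen], rfl, ?_, by simp, by simp⟩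
        · simp only [ilv]
          rw [← heq]
        · rw [show (b :: bs').getLast? = bs'.getLast? from ?_]
          · exact hlast'
          · cases bs' with
            | nil => exact absurd rfl hbs'ne
            | cons c t => exact List.getLast?_cons_cons


@[simp] lemma auxAdj_lr (E μ : Finset (α × β)) (a : α) (b : β) :
    auxAdj E μ (Sum.inl a) (Sum.inr b) ↔ ((a, b) ∈ E ∧ (a, b) ∉ μ) := Iff.rfl
@[simp] lemma auxAdj_rl (E μ : Finset (α × β)) (a : α) (b : β) :
    auxAdj E μ (Sum.inr b) (Sum.inl a) ↔ (a, b) ∈ μ := Iff.rfl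

lemma exists_unmatched [DecidableEq α] [DecidableEq β] (μ ν : Finset (α × β))
    (hν : IsMatching ν) (h : μ.card < ν.card) :
    ∃ a0 b0, (a0, b0) ∈ ν ∧ ∀ y, (a0, y) ∉ μ := by
  have hν1 : (ν.image Prod.fst).card = ν.card :=
    Finset.card_image_of_injOn (fun e he f hf hef => hν e he f hf (Or.inl hef))
  have hμ1 : (μ.image Prod.fst).card ≤ μ.card := Finset.card_image_le
  have hns : ¬ (ν.image Prod.fst ⊆ μ.image Prod.fst) := by
    intro hsub
    have := Finset.card_le_card hsub
    omega
  obtain ⟨a0, ha0ν, ha0μ⟩ := Finset.not_subset.mp hns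
  obtain ⟨e, heν, he1⟩ := Finset.mem_image.mp ha0ν
  have hee : e = (a0, e.2) := by rw [← he1]
  refine ⟨a0, e.2, hee ▸ heν, ?_⟩
  intro y hy
  exact ha0μ (Finset.mem_image.mpr ⟨(a0, y), hy, rfl⟩)

lemma symmDiff_eq_sdiff_union {γ : Type*} [DecidableEq γ] (μ S T : Finset γ)
    (hT : T ⊆ μ) (hS : ∀ x ∈ S, x ∉ μ) : symmDiff μ (S ∪ T) = (μ \ T) ∪ S := by
  ext x
  rw [Finset.mem_symmDiff]
  simp only [Finset.mem_union, Finset.mem_sdiff]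
  have hTx : x ∈ T → x ∈ μ := fun h => hT h
  have hSx := hS x
  tauto

end Machinery

/-- If `μ` is a matching of size `k` of minimum weight among all matchings of
size `k` in `G`, and `P` is a shortest augmenting path in `(G_μ, w_μ)` (a directed path from an
unmatched vertex of `V⁺` to an unmatched vertex of `V⁻`, of minimum auxiliary weight among all
augmenting paths), then `μ △ P` is a matching of size `k + 1` of minimum weight among all
matchings of size `k + 1` in `G`. -/
theorem augment_along_shortest_augmenting_path
    [Fintype α] [Fintype β] [DecidableEq α] [DecidableEq β]
    (E μ : Finset (α × β)) (w : α × β → ℝ) (k : ℕ) (u : α) (v : β) (P : List (α ⊕ β))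
    (hμE : μ ⊆ E) (hμ : IsMatching μ) (hcard : μ.card = k)
    (hmin : ∀ ν ⊆ E, IsMatching ν → ν.card = k → matchingWeight w μ ≤ matchingWeight w ν)
    (hu : ∀ y : β, (u, y) ∉ μ) (hv : ∀ x : α, (x, v) ∉ μ)
    (hP : IsDiPath (auxAdj E μ) (Sum.inl u) (Sum.inr v) P)
    (hPmin : ∀ (u' : α) (v' : β) (Q : List (α ⊕ β)),
      (∀ y : β, (u', y) ∉ μ) → (∀ x : α, (x, v') ∉ μ) →
      IsDiPath (auxAdj E μ) (Sum.inl u') (Sum.inr v') Q →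
      walkWeight (auxW w) P ≤ walkWeight (auxW w) Q) :
    symmDiff μ (usedEdges P) ⊆ E ∧ IsMatching (symmDiff μ (usedEdges P)) ∧
      (symmDiff μ (usedEdges P)).card = k + 1 ∧
      ∀ ν ⊆ E, IsMatching ν → ν.card = k + 1 →
        matchingWeight w (symmDiff μ (usedEdges P)) ≤ matchingWeight w ν := by
  classical
  obtain ⟨hPhead, hPlast, hPchain, hPnodup⟩ := hP
  obtain ⟨asP, bsP, hPeq, hPlen, hasPhead, hbsPlast, hbsPne, hasPne⟩ :=
    decode E μ P.length P le_rfl hPchain u v hPhead hPlast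
  subst hPeq
  have hlenor : asP.length = bsP.length ∨ asP.length = bsP.length + 1 := Or.inl hPlen
  obtain ⟨hfwdP, hbwdP⟩ := (ilv_chain'_iff (auxAdj E μ) asP bsP hlenor).mp hPchain
  have hfwdPE : ∀ p ∈ asP.zip bsP, p ∈ E ∧ p ∉ μ := fun p hp => hfwdP p hp
  have hbwdPμ : ∀ p ∈ asP.tail.zip bsP, p ∈ μ := fun p hp => hbwdP p hp
  have hndP := (ilv_nodup_iff hlenor).mp hPnodup
  have hheadcond : ∀ a ∈ asP.head?, ∀ y, (a, y) ∉ μ := by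
    intro a ha y
    rw [hasPhead] at ha
    simp only [Option.mem_def, Option.some.injEq] at ha
    subst ha
    exact hu y
  have hlastcond : ∀ b ∈ bsP.getLast?, ∀ x, (x, b) ∉ μ := by
    intro b hb x
    rw [hbsPlast] at hb
    simp only [Option.mem_def, Option.some.injEq] at hb
    subst hb
    exact hv x
  have hused : usedEdges (ilv asP bsP)
      = (asP.zip bsP).toFinset ∪ (asP.tail.zip bsP).toFinset := by
    rw [usedEdges, List.toFinset_eq_of_perm _ _ (used_ilv asP bsP hlenor),
      List.toFinset_append]
  have hsd : symmDiff μ (usedEdges (ilv asP bsP))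
      = (μ \ (asP.tail.zip bsP).toFinset) ∪ (asP.zip bsP).toFinset := by
    rw [hused]
    exact symmDiff_eq_sdiff_union μ _ _
      (fun x hx => hbwdPμ x (List.mem_toFinset.mp hx))
      (fun x hx => (hfwdPE x (List.mem_toFinset.mp hx)).2)
  rw [hsd]
  obtain ⟨hm1, hm2, hm3⟩ := muSwap w μ asP bsP hμ hndP.1 hndP.2 hbwdPμ hheadcond
    (Or.inl ⟨hPlen, hlastcond⟩)
  have hbsPpos : 0 < bsP.length := List.length_pos_iff.mpr hbsPne
  rw [hPlen, min_self, hcard] at hm2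
  have hcard' : ((μ \ (asP.tail.zip bsP).toFinset) ∪ (asP.zip bsP).toFinset).card = k + 1 := by
    omega
  have hsubE : ((μ \ (asP.tail.zip bsP).toFinset) ∪ (asP.zip bsP).toFinset) ⊆ E := by
    intro x hx
    rcases Finset.mem_union.mp hx with hx | hx
    · exact hμE (Finset.mem_sdiff.mp hx).1
    · exact (hfwdPE x (List.mem_toFinset.mp hx)).1
  have hWP := walkWeight_ilv w asP bsP hlenor
  have hwμ' : matchingWeight w ((μ \ (asP.tail.zip bsP).toFinset) ∪ (asP.zip bsP).toFinset)
      = matchingWeight w μ + walkWeight (auxW w) (ilv asP bsP) := by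
    rw [hWP]; linarith [hm3]
  refine ⟨hsubE, hm1, hcard', ?_⟩
  have key : ∀ n (ν : Finset (α × β)), ν ⊆ E → IsMatching ν → ν.card = k + 1 →
      (ν \ μ).card ≤ n →
      matchingWeight w μ + walkWeight (auxW w) (ilv asP bsP) ≤ matchingWeight w ν := by
    intro n
    induction n using Nat.strong_induction_on with
    | _ n IHn =>
    intro ν hνE hν hνc hb
    obtain ⟨a0, b0, ha0ν, ha0μ⟩ := exists_unmatched μ ν hν (by omega)
    obtain ⟨as, bs, hhead, hbsne, hnda, hndb, hfwd, hbwd, hinv, hfin⟩ :=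
      extract ν.card μ ν le_rfl hμ hν a0 b0 ha0ν ha0μ
    have hasne : as ≠ [] := by intro e; subst e; simp at hhead
    have haspos : 0 < as.length := List.length_pos_iff.mpr hasne
    have hbspos : 0 < bs.length := List.length_pos_iff.mpr hbsne
    have hheadc : ∀ a ∈ as.head?, ∀ y, (a, y) ∉ μ := by
      intro a ha y
      rw [hhead] at ha
      simp only [Option.mem_def, Option.some.injEq] at ha
      subst ha
      exact ha0μ y
    have hfwdnμ : ∀ p ∈ as.zip bs, p ∉ μ := fwd_not_mem hμ hndb hbwd hheadc
    rcases hfin with ⟨hlen, hlastb⟩ | ⟨hlen, hlasta⟩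
    · -- Case A: we found an augmenting path
      have hlor : as.length = bs.length ∨ as.length = bs.length + 1 := Or.inl hlen
      have hb1 : bs.getLast? = some (bs[bs.length - 1]'(by omega)) := getLast?_getElem hbspos
      have hQhead : (ilv as bs).head? = some (Sum.inl a0) := by
        cases as with
        | nil => exact absurd rfl hasne
        | cons x t =>
          simp only [List.head?_cons, Option.some.injEq] at hhead
          subst hhead
          exact ilv_head? _ _ _
      have hQpath : IsDiPath (auxAdj E μ) (Sum.inl a0)
          (Sum.inr (bs[bs.length - 1]'(by omega))) (ilv as bs) := by
        refine ⟨hQhead, ?_, ?_, ?_⟩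
        · rw [ilv_getLast? as bs hlen hbsne, hb1]
          rfl
        · rw [ilv_chain'_iff _ as bs hlor]
          exact ⟨fun p hp => ⟨hνE (hfwd p hp), hfwdnμ p hp⟩, fun p hp => hbwd p hp⟩
        · rw [ilv_nodup_iff hlor]
          exact ⟨hnda, hndb⟩
      have hWQ := hPmin a0 _ (ilv as bs) ha0μ
        (fun x => hlastb _ (Option.mem_def.mpr hb1) x) hQpath
      obtain ⟨hn1, hn2, hn3⟩ := nuSwap w ν as bs hν hnda hndb hfwd hlor
        (fun h => absurd h (by omega))
      have hν'E : ((ν \ (as.zip bs).toFinset) ∪ (as.tail.zip bs).toFinset) ⊆ E := by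
        intro x hx
        rcases Finset.mem_union.mp hx with hx | hx
        · exact hνE (Finset.mem_sdiff.mp hx).1
        · exact hμE (hbwd x (List.mem_toFinset.mp hx))
      rw [hlen, min_self, hνc] at hn2
      have hν'c : ((ν \ (as.zip bs).toFinset) ∪ (as.tail.zip bs).toFinset).card = k := by
        omega
      have hμν' := hmin _ hν'E hn1 hν'c
      have hwalkQ := walkWeight_ilv w as bs hlor
      have h1 : matchingWeight w μ + walkWeight (auxW w) (ilv asP bsP)
          ≤ matchingWeight w μ + walkWeight (auxW w) (ilv as bs) := by linarith [hWQ]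
      rw [hwalkQ] at h1
      linarith [hn3, hμν']
    · -- Case B: even alternating path, swap and recurse
      have hlor : as.length = bs.length ∨ as.length = bs.length + 1 := Or.inr hlen
      obtain ⟨hm1', hm2', hm3'⟩ := muSwap w μ as bs hμ hnda hndb hbwd hheadc (Or.inr hlen)
      have hμ''E : ((μ \ (as.tail.zip bs).toFinset) ∪ (as.zip bs).toFinset) ⊆ E := by
        intro x hx
        rcases Finset.mem_union.mp hx with hx | hx
        · exact hμE (Finset.mem_sdiff.mp hx).1
        · exact hνE (hfwd x (List.mem_toFinset.mp hx))
      rw [hlen, hcard] at hm2'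
      have hμ''c : ((μ \ (as.tail.zip bs).toFinset) ∪ (as.zip bs).toFinset).card = k := by
        omega
      have hWge := hmin _ hμ''E hm1' hμ''c
      obtain ⟨hn1, hn2, hn3⟩ := nuSwap w ν as bs hν hnda hndb hfwd hlor
        (fun _ => hlasta)
      have hν'E : ((ν \ (as.zip bs).toFinset) ∪ (as.tail.zip bs).toFinset) ⊆ E := by
        intro x hx
        rcases Finset.mem_union.mp hx with hx | hx
        · exact hνE (Finset.mem_sdiff.mp hx).1
        · exact hμE (hbwd x (List.mem_toFinset.mp hx))
      rw [hlen, hνc] at hn2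
      have hν'c : ((ν \ (as.zip bs).toFinset) ∪ (as.tail.zip bs).toFinset).card = k + 1 := by
        omega
      have hzpos : 0 < (as.zip bs).length := by
        rw [List.length_zip]; omega
      obtain ⟨p, hp⟩ := List.exists_mem_of_ne_nil _ (List.ne_nil_of_length_pos hzpos)
      have hpν : p ∈ ν := hfwd p hp
      have hpμ : p ∉ μ := hfwdnμ p hp
      have hpν' : p ∉ ((ν \ (as.zip bs).toFinset) ∪ (as.tail.zip bs).toFinset) := by
        intro hx
        rcases Finset.mem_union.mp hx with hx | hx
        · exact (Finset.mem_sdiff.mp hx).2 (List.mem_toFinset.mpr hp)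
        · exact hpμ (hbwd p (List.mem_toFinset.mp hx))
      have hss : (((ν \ (as.zip bs).toFinset) ∪ (as.tail.zip bs).toFinset) \ μ) ⊂ (ν \ μ) := by
        constructor
        · intro x hx
          obtain ⟨hx1, hx2⟩ := Finset.mem_sdiff.mp hx
          rcases Finset.mem_union.mp hx1 with hx1 | hx1
          · exact Finset.mem_sdiff.mpr ⟨(Finset.mem_sdiff.mp hx1).1, hx2⟩
          · exact absurd (hbwd x (List.mem_toFinset.mp hx1)) hx2
        · intro hsub
          have hpmem : p ∈ (ν \ μ) := Finset.mem_sdiff.mpr ⟨hpν, hpμ⟩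
          have := Finset.mem_sdiff.mp (hsub hpmem)
          exact hpν' this.1
      have hdec := Finset.card_lt_card hss
      have hrec := IHn ((((ν \ (as.zip bs).toFinset) ∪ (as.tail.zip bs).toFinset) \ μ).card)
        (by omega) _ hν'E hn1 hν'c le_rfl
      linarith [hn3, hm3', hWge]
  intro ν hνE hν hνc
  have hfin := key ((ν \ μ).card) ν hνE hν hνc le_rfl
  rw [hwμ']
  exact hfin
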